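/- Let v ∈ ℝ³ with 0 < |v| < 1, γ = (1 − |v|²)^{−1/2}, and b ≥ 0. If (ω, k) ∈ ℂ × ℂ³ satisfies Im ω ≤ |Im k| + b, then its image (ω′, k′) under the Lorentz boost Λ(v) satisfies Im ω′ ≤ |Im k′| + γ(1 + |v|) b. -/

import Mathlib

open scoped BigOperators

lemma sqrt_sum_sub_le (x y : Fin 3 → ℝ) :
    Real.sqrt (∑ i, x i ^ 2) - Real.sqrt (∑ i, y i ^ 2) ≤
      Real.sqrt (∑ i, (x i - y i) ^ 2) := by
  have hM : Real.sqrt (∑ i, x i ^ 2) ^ 2 = ∑ i, x i ^ 2 := Real.sq_sqrt (by positivity)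
  have hW : Real.sqrt (∑ i, y i ^ 2) ^ 2 = ∑ i, y i ^ 2 := Real.sq_sqrt (by positivity)
  have hCS : (∑ i, x i * y i) ≤ Real.sqrt (∑ i, x i ^ 2) * Real.sqrt (∑ i, y i ^ 2) := by
    calc (∑ i, x i * y i) ≤ |∑ i, x i * y i| := le_abs_self _
      _ = Real.sqrt ((∑ i, x i * y i) ^ 2) := (Real.sqrt_sq_eq_abs _).symm
      _ ≤ Real.sqrt ((∑ i, x i ^ 2) * ∑ i, y i ^ 2) :=
          Real.sqrt_le_sqrt (Finset.sum_mul_sq_le_sq_mul_sq Finset.univ x y)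
      _ = Real.sqrt (∑ i, x i ^ 2) * Real.sqrt (∑ i, y i ^ 2) :=
          Real.sqrt_mul (by positivity) _
  have hexp : ∑ i, (x i - y i) ^ 2 =
      (∑ i, x i ^ 2) - 2 * (∑ i, x i * y i) + (∑ i, y i ^ 2) := by
    simp [Fin.sum_univ_three]; ring
  have h2 : (Real.sqrt (∑ i, x i ^ 2) - Real.sqrt (∑ i, y i ^ 2)) ^ 2 ≤
      ∑ i, (x i - y i) ^ 2 := by nlinarith
  calc Real.sqrt (∑ i, x i ^ 2) - Real.sqrt (∑ i, y i ^ 2)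
      ≤ |Real.sqrt (∑ i, x i ^ 2) - Real.sqrt (∑ i, y i ^ 2)| := le_abs_self _
    _ = Real.sqrt ((Real.sqrt (∑ i, x i ^ 2) - Real.sqrt (∑ i, y i ^ 2)) ^ 2) :=
        (Real.sqrt_sq_eq_abs _).symm
    _ ≤ Real.sqrt (∑ i, (x i - y i) ^ 2) := Real.sqrt_le_sqrt h2

lemma key_scalar (B a T2 γ s0 : ℝ) (hB0 : 0 < B) (hγ0 : 0 < γ)
    (hγ2 : γ ^ 2 * (1 - B) = 1) (hCS : a ^ 2 ≤ B * T2) (hT2 : 0 ≤ T2)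
    (hs0T : s0 ≤ Real.sqrt T2) :
    γ * (s0 - a) ≤ Real.sqrt (T2 + 2 * ((γ - 1) * a / B - γ * s0) * a +
      ((γ - 1) * a / B - γ * s0) ^ 2 * B) := by
  have hBne : B ≠ 0 := ne_of_gt hB0
  set c0 : ℝ := (γ - 1) * a / B - γ * s0 with hc0def
  have hc0B : c0 * B = (γ - 1) * a - γ * s0 * B := by
    rw [hc0def]; field_simp
  have hT : Real.sqrt T2 ^ 2 = T2 := Real.sq_sqrt hT2
  have hT0 : 0 ≤ Real.sqrt T2 := Real.sqrt_nonneg _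
  have hB1 : B < 1 := by nlinarith [sq_nonneg γ]
  have hX2nn : 0 ≤ T2 + 2 * c0 * a + c0 ^ 2 * B := by
    nlinarith [sq_nonneg (c0 * B + a), mul_pos hB0 hB0]
  rcases le_or_gt (γ * (s0 - a)) 0 with h0 | h0
  · exact h0.trans (Real.sqrt_nonneg _)
  · have haT : -Real.sqrt T2 ≤ a := by
      nlinarith [mul_nonneg (by linarith : (0:ℝ) ≤ 1 - B) hT2, sq_nonneg (a + Real.sqrt T2)]
    have hs0a : a < s0 := by nlinarith
    have hs0sq : s0 ^ 2 ≤ T2 := by nlinarith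
    have hid : γ ^ 2 * (s0 - a) ^ 2 = 2 * c0 * a + c0 ^ 2 * B + s0 ^ 2 := by
      have hmul : (γ ^ 2 * (s0 - a) ^ 2) * B = (2 * c0 * a + c0 ^ 2 * B + s0 ^ 2) * B := by
        linear_combination (B * s0 ^ 2 - a ^ 2) * hγ2 -
          (c0 * B + ((γ - 1) * a - γ * s0 * B) + 2 * a) * hc0B
      exact mul_right_cancel₀ hBne hmul
    have hsq : (γ * (s0 - a)) ^ 2 ≤ T2 + 2 * c0 * a + c0 ^ 2 * B := by nlinarith
    exact (Real.le_sqrt h0.le hX2nn).mpr hsq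

theorem test : True := trivial

lemma aux_real (v q : Fin 3 → ℝ) (γ b s : ℝ) (hB0 : 0 < ∑ i, v i ^ 2)
    (hγ0 : 0 < γ) (hγ2 : γ ^ 2 * (1 - ∑ i, v i ^ 2) = 1) (hb : 0 ≤ b)
    (hs : s ≤ Real.sqrt (∑ i, q i ^ 2) + b) :
    γ * (s - ∑ i, v i * q i) ≤
      Real.sqrt (∑ i, (q i +
        ((γ - 1) * (∑ j, v j * q j) / (∑ j, v j ^ 2) - γ * s) * v i) ^ 2)
      + γ * (1 + Real.sqrt (∑ i, v i ^ 2)) * b := by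
  have hCS := Finset.sum_mul_sq_le_sq_mul_sq Finset.univ v q
  have key := key_scalar (∑ i, v i ^ 2) (∑ i, v i * q i) (∑ i, q i ^ 2) γ (s - b)
    hB0 hγ0 hγ2 (by simpa using hCS) (by positivity) (by linarith)
  set c0 : ℝ := (γ - 1) * (∑ i, v i * q i) / (∑ i, v i ^ 2) - γ * (s - b) with hc0
  have hX2 : (∑ i, q i ^ 2) + 2 * c0 * (∑ i, v i * q i) + c0 ^ 2 * (∑ i, v i ^ 2)
      = ∑ i, (q i + c0 * v i) ^ 2 := by
    simp only [Fin.sum_univ_three]; ring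
  rw [hX2] at key
  have htri := sqrt_sum_sub_le (fun i => q i + c0 * v i) (fun i => γ * b * v i)
  have hyb : Real.sqrt (∑ i, (γ * b * v i) ^ 2) = γ * b * Real.sqrt (∑ i, v i ^ 2) := by
    have h1 : ∑ i, (γ * b * v i) ^ 2 = (γ * b) ^ 2 * ∑ i, v i ^ 2 := by
      simp only [Fin.sum_univ_three]; ring
    rw [h1, Real.sqrt_mul (by positivity), Real.sqrt_sq (by positivity)]
  rw [hyb] at htri
  have hmatch : (∑ i, (q i +
        ((γ - 1) * (∑ j, v j * q j) / (∑ j, v j ^ 2) - γ * s) * v i) ^ 2)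
      = ∑ i, ((fun i => q i + c0 * v i) i - (fun i => γ * b * v i) i) ^ 2 := by
    refine Finset.sum_congr rfl fun i _ => ?_
    have hc : (γ - 1) * (∑ j, v j * q j) / (∑ j, v j ^ 2) - γ * s = c0 - γ * b := by
      rw [hc0]; ring
    rw [hc]; ring
  rw [hmatch]
  have hexp : γ * (1 + Real.sqrt (∑ i, v i ^ 2)) * b
      = γ * b + γ * b * Real.sqrt (∑ i, v i ^ 2) := by ring
  have : γ * (s - ∑ i, v i * q i) = γ * ((s - b) - ∑ i, v i * q i) + γ * b := by ring
  rw [this, hexp]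
  linarith

theorem causality_bound_under_boost (v : Fin 3 → ℝ)
    (hv0 : 0 < Real.sqrt (∑ i, v i ^ 2)) (hv1 : Real.sqrt (∑ i, v i ^ 2) < 1)
    (γ : ℝ) (hγ : γ = (1 - ∑ i, v i ^ 2) ^ (-(1 : ℝ) / 2))
    (b : ℝ) (hb : 0 ≤ b) (ω : ℂ) (k : Fin 3 → ℂ)
    (h : ω.im ≤ Real.sqrt (∑ i, (k i).im ^ 2) + b)
    (ω' : ℂ) (hω' : ω' = (γ : ℂ) * (ω - ∑ i, (v i : ℂ) * k i))
    (k' : Fin 3 → ℂ)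
    (hk' : k' = fun i => k i +
      (((γ : ℂ) - 1) * (∑ j, (v j : ℂ) * k j) / ((∑ j, v j ^ 2 : ℝ) : ℂ) - (γ : ℂ) * ω)
        * (v i : ℂ)) :
    ω'.im ≤ Real.sqrt (∑ i, (k' i).im ^ 2) + γ * (1 + Real.sqrt (∑ i, v i ^ 2)) * b := by
  have hB0 : 0 < ∑ i, v i ^ 2 := Real.sqrt_pos.mp hv0
  have hB1 : (∑ i, v i ^ 2) < 1 := by
    nlinarith [Real.sq_sqrt hB0.le, Real.sqrt_nonneg (∑ i, v i ^ 2)]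
  have hγ0 : 0 < γ := hγ ▸ Real.rpow_pos_of_pos (by linarith) _
  have hγ2 : γ ^ 2 * (1 - ∑ i, v i ^ 2) = 1 := by
    have h2 : γ ^ 2 = (1 - ∑ i, v i ^ 2) ^ (-(1 : ℝ)) := by
      rw [hγ, ← Real.rpow_natCast ((1 - ∑ i, v i ^ 2) ^ (-(1:ℝ)/2)) 2,
        ← Real.rpow_mul (by linarith)]
      norm_num
    rw [h2, Real.rpow_neg_one]
    exact inv_mul_cancel₀ (by linarith)
  have hSim : (∑ j, (v j : ℂ) * k j).im = ∑ j, v j * (k j).im := by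
    rw [Complex.im_sum]
    exact Finset.sum_congr rfl fun j _ => by simp [Complex.mul_im]
  have hωim : ω'.im = γ * (ω.im - ∑ j, v j * (k j).im) := by
    rw [hω']
    simp [Complex.mul_im, Complex.sub_im, hSim]
  have hkim : ∀ i, (k' i).im = (k i).im +
      ((γ - 1) * (∑ j, v j * (k j).im) / (∑ j, v j ^ 2) - γ * ω.im) * v i := by
    intro i
    rw [hk']
    simp only [Complex.add_im, Complex.mul_im, Complex.sub_im, Complex.sub_re,
      Complex.ofReal_re, Complex.ofReal_im, Complex.one_re, Complex.one_im,
      Complex.div_ofReal_im, Complex.mul_re]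
    rw [hSim]
    ring
  have hsum : (∑ i, (k' i).im ^ 2) = ∑ i, ((k i).im +
      ((γ - 1) * (∑ j, v j * (k j).im) / (∑ j, v j ^ 2) - γ * ω.im) * v i) ^ 2 :=
    Finset.sum_congr rfl fun i _ => by rw [hkim i]
  rw [hωim, hsum]
  exact aux_real v (fun i => (k i).im) γ b ω.im hB0 hγ0 hγ2 hb h
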